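/- Suppose the pure-text uniform convergence event E_txt := {ω : ∀ θ ∈ Θ, |R̂_txt(θ, ω) − R_txt(θ)| ≤ ε_txt} and the multi-modal uniform convergence event E_mul := {ω : ∀ θ ∈ Θ, |R̂_mul(θ, ω) − R_mul(θ)| ≤ ε_mul} each have probability at least 1 − δ. Then with probability at least 1 − 2·δ, the empirical risk minimizer satisfies: for every θ⋆ ∈ Θ, R_mul(θ̂(ω)) ≤ R_mul(θ⋆) + 2·(N·ε_txt + M·ε_mul)/(N+M) + (2·N/(N+M))·Δ. -/

import Mathlib

open MeasureTheory

theorem erm_multimodal_excess_risk_bound_high_probability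
    {Θ : Type*} [Nonempty Θ]
    {Ω : Type*} [MeasurableSpace Ω] (P : Measure Ω) [IsProbabilityMeasure P]
    (N M : ℕ) (hN : 0 < N) (hM : 0 < M)
    (Rtxt Rmul : Θ → ℝ) (Rhtxt Rhmul : Θ → Ω → ℝ)
    (εtxt εmul Δ δ : ℝ) (hεtxt : 0 ≤ εtxt) (hεmul : 0 ≤ εmul) (hΔ : 0 ≤ Δ)
    (hδ0 : 0 ≤ δ) (hδ1 : δ ≤ 1)
    (hcross : ∀ θ : Θ, |Rtxt θ - Rmul θ| ≤ Δ)
    (θhat : Ω → Θ)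
    (hERM : ∀ ω : Ω, ∀ θ : Θ,
      ((N : ℝ) * Rhtxt (θhat ω) ω + (M : ℝ) * Rhmul (θhat ω) ω) / ((N : ℝ) + M) ≤
        ((N : ℝ) * Rhtxt θ ω + (M : ℝ) * Rhmul θ ω) / ((N : ℝ) + M))
    (hEtxt_meas : MeasurableSet {ω : Ω | ∀ θ : Θ, |Rhtxt θ ω - Rtxt θ| ≤ εtxt})
    (hEmul_meas : MeasurableSet {ω : Ω | ∀ θ : Θ, |Rhmul θ ω - Rmul θ| ≤ εmul})
    (hPtxt : ENNReal.ofReal (1 - δ) ≤ P {ω : Ω | ∀ θ : Θ, |Rhtxt θ ω - Rtxt θ| ≤ εtxt})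
    (hPmul : ENNReal.ofReal (1 - δ) ≤ P {ω : Ω | ∀ θ : Θ, |Rhmul θ ω - Rmul θ| ≤ εmul}) :
    ENNReal.ofReal (1 - 2 * δ) ≤
      P {ω : Ω | ∀ θstar : Θ,
        Rmul (θhat ω) ≤ Rmul θstar + 2 * ((N : ℝ) * εtxt + (M : ℝ) * εmul) / ((N : ℝ) + M)
          + (2 * (N : ℝ) / ((N : ℝ) + M)) * Δ} := by
  set A := {ω : Ω | ∀ θ : Θ, |Rhtxt θ ω - Rtxt θ| ≤ εtxt} with hA
  set B := {ω : Ω | ∀ θ : Θ, |Rhmul θ ω - Rmul θ| ≤ εmul} with hB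
  have hs : (0:ℝ) < (N : ℝ) + M := by positivity
  have hNn : (0:ℝ) ≤ (N:ℝ) := Nat.cast_nonneg N
  have hMn : (0:ℝ) ≤ (M:ℝ) := Nat.cast_nonneg M
  have hsub : A ∩ B ⊆ {ω : Ω | ∀ θstar : Θ,
      Rmul (θhat ω) ≤ Rmul θstar + 2 * ((N : ℝ) * εtxt + (M : ℝ) * εmul) / ((N : ℝ) + M)
        + (2 * (N : ℝ) / ((N : ℝ) + M)) * Δ} := by
    rintro ω ⟨hωA, hωB⟩ θstar
    set a := θhat ω
    have f1 : (N:ℝ) * (Rmul a - Rtxt a) ≤ (N:ℝ) * Δ :=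
      mul_le_mul_of_nonneg_left (by linarith [abs_le.mp (hcross a)] ) hNn
    have f2 : (N:ℝ) * (Rtxt a - Rhtxt a ω) ≤ (N:ℝ) * εtxt :=
      mul_le_mul_of_nonneg_left (by linarith [abs_le.mp (hωA a)]) hNn
    have f3 : (M:ℝ) * (Rmul a - Rhmul a ω) ≤ (M:ℝ) * εmul :=
      mul_le_mul_of_nonneg_left (by linarith [abs_le.mp (hωB a)]) hMn
    have f4 : (N:ℝ) * Rhtxt a ω + (M:ℝ) * Rhmul a ω ≤
        (N:ℝ) * Rhtxt θstar ω + (M:ℝ) * Rhmul θstar ω :=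
      (div_le_div_iff_of_pos_right hs).mp (hERM ω θstar)
    have f5 : (N:ℝ) * (Rhtxt θstar ω - Rtxt θstar) ≤ (N:ℝ) * εtxt :=
      mul_le_mul_of_nonneg_left (by linarith [abs_le.mp (hωA θstar)]) hNn
    have f6 : (M:ℝ) * (Rhmul θstar ω - Rmul θstar) ≤ (M:ℝ) * εmul :=
      mul_le_mul_of_nonneg_left (by linarith [abs_le.mp (hωB θstar)]) hMn
    have f7 : (N:ℝ) * (Rtxt θstar - Rmul θstar) ≤ (N:ℝ) * Δ :=
      mul_le_mul_of_nonneg_left (by linarith [abs_le.mp (hcross θstar)]) hNn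
    have key : (N:ℝ) * Rmul a + (M:ℝ) * Rmul a ≤
        (N:ℝ) * Rmul θstar + (M:ℝ) * Rmul θstar
          + 2 * ((N:ℝ) * εtxt + (M:ℝ) * εmul) + 2 * (N:ℝ) * Δ := by nlinarith
    have hexp : ((N:ℝ) + M) * (Rmul θstar + 2 * ((N : ℝ) * εtxt + (M : ℝ) * εmul) / ((N : ℝ) + M)
        + (2 * (N : ℝ) / ((N : ℝ) + M)) * Δ)
        = (N:ℝ) * Rmul θstar + (M:ℝ) * Rmul θstar
          + 2 * ((N:ℝ) * εtxt + (M:ℝ) * εmul) + 2 * (N:ℝ) * Δ := by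
      field_simp
    rw [show Rmul (θhat ω) = Rmul a from rfl, ← mul_le_mul_iff_right₀ hs, hexp]
    nlinarith [key]
  have hδ2 : (0:ℝ) ≤ 2 * δ := by linarith
  have hcomplA : P Aᶜ ≤ ENNReal.ofReal δ := by
    have := prob_compl_eq_one_sub (μ := P) hEtxt_meas
    rw [this]
    calc 1 - P A ≤ 1 - ENNReal.ofReal (1 - δ) := tsub_le_tsub_left hPtxt 1
      _ = ENNReal.ofReal 1 - ENNReal.ofReal (1 - δ) := by rw [ENNReal.ofReal_one]
      _ = ENNReal.ofReal (1 - (1 - δ)) := (ENNReal.ofReal_sub 1 (by linarith)).symm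
      _ = ENNReal.ofReal δ := by ring_nf
  have hcomplB : P Bᶜ ≤ ENNReal.ofReal δ := by
    have := prob_compl_eq_one_sub (μ := P) hEmul_meas
    rw [this]
    calc 1 - P B ≤ 1 - ENNReal.ofReal (1 - δ) := tsub_le_tsub_left hPmul 1
      _ = ENNReal.ofReal 1 - ENNReal.ofReal (1 - δ) := by rw [ENNReal.ofReal_one]
      _ = ENNReal.ofReal (1 - (1 - δ)) := (ENNReal.ofReal_sub 1 (by linarith)).symm
      _ = ENNReal.ofReal δ := by ring_nf
  have hcompl : P (A ∩ B)ᶜ ≤ ENNReal.ofReal (2 * δ) := by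
    calc P (A ∩ B)ᶜ = P (Aᶜ ∪ Bᶜ) := by rw [Set.compl_inter]
      _ ≤ P Aᶜ + P Bᶜ := measure_union_le _ _
      _ ≤ ENNReal.ofReal δ + ENNReal.ofReal δ := add_le_add hcomplA hcomplB
      _ = ENNReal.ofReal (2 * δ) := by rw [← ENNReal.ofReal_add hδ0 hδ0]; ring_nf
  have hAB : ENNReal.ofReal (1 - 2 * δ) ≤ P (A ∩ B) := by
    rw [ENNReal.ofReal_sub 1 hδ2, ENNReal.ofReal_one]
    refine tsub_le_iff_right.mpr ?_
    have h1 : (1:ENNReal) = P (A ∩ B) + P (A ∩ B)ᶜ := by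
      rw [measure_add_measure_compl (hEtxt_meas.inter hEmul_meas), measure_univ]
    rw [h1]
    exact add_le_add le_rfl hcompl
  exact hAB.trans (measure_mono hsub)
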